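/- arXiv:2502.20659 — 4 statements merged into one kernel-verified Lean document; each statement's English description precedes it below -/
import Mathlib

section
/- The linear map R_{(m)}: V⊗V → V⊗V defined on basis elements by R(a,b) = Σ R^{ab}_{cd} (c,d) with R^{ab}_{cd} = 1 if d=a≥b=c, y² if d=a<b=c, 1−y² if c=a<b=d, and 0 otherwise, satisfies the Yang-Baxter equation (R⊗Id)∘(Id⊗R)∘(R⊗Id) = (Id⊗R)∘(R⊗Id)∘(Id⊗R). -/
/-- Boltzmann weights of the normalized Yang-Baxter operator `R_{(m)}`:
`Rc t a b c d` is the coefficient `R^{ab}_{cd}`, with `t` playing the role of `y²`. -/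
def Rc {k : Type*} [CommRing k] (t : k) {m : ℕ} (a b c d : Fin m) : k :=
  if d = a ∧ c = b ∧ b ≤ a then 1
  else if d = a ∧ c = b ∧ a < b then t
  else if c = a ∧ d = b ∧ a < b then 1 - t
  else 0

/-- The matrix of `R_{(m)}` on `V ⊗ V`, rows indexed by output pairs `(c,d)`,
columns by input pairs `(a,b)`. -/
def Rmat {k : Type*} [CommRing k] (t : k) (m : ℕ) :
    Matrix (Fin m × Fin m) (Fin m × Fin m) k :=
  fun cd ab => Rc t ab.1 ab.2 cd.1 cd.2

/-- The matrix of `R ⊗ Id` on `V ⊗ V ⊗ V`. -/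
def R12 {k : Type*} [CommRing k] (t : k) (m : ℕ) :
    Matrix (Fin m × Fin m × Fin m) (Fin m × Fin m × Fin m) k :=
  fun p q => Rmat t m (p.1, p.2.1) (q.1, q.2.1) * (if p.2.2 = q.2.2 then 1 else 0)

/-- The matrix of `Id ⊗ R` on `V ⊗ V ⊗ V`. -/
def R23 {k : Type*} [CommRing k] (t : k) (m : ℕ) :
    Matrix (Fin m × Fin m × Fin m) (Fin m × Fin m × Fin m) k :=
  fun p q => (if p.1 = q.1 then (1 : k) else 0) * Rmat t m (p.2.1, p.2.2) (q.2.1, q.2.2)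


lemma R12ptw {k : Type*} [CommRing k] (t : k) {m : ℕ}
    (c p : Fin m × Fin m × Fin m) :
    R12 t m c p =
      (if c.1 ≤ c.2.1 then (1:k) else t) * (if p = (c.2.1, c.1, c.2.2) then 1 else 0)
      + (if c.1 < c.2.1 then 1 - t else 0) * (if p = c then 1 else 0) := by
  obtain ⟨c1, c2, c3⟩ := c
  obtain ⟨p1, p2, p3⟩ := p
  simp only [R12, Rmat, Rc, Prod.mk.injEq]
  split_ifs
  any_goals ring
  any_goals (exfalso; omega)

lemma R23ptw {k : Type*} [CommRing k] (t : k) {m : ℕ}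
    (c p : Fin m × Fin m × Fin m) :
    R23 t m c p =
      (if c.2.1 ≤ c.2.2 then (1:k) else t) * (if p = (c.1, c.2.2, c.2.1) then 1 else 0)
      + (if c.2.1 < c.2.2 then 1 - t else 0) * (if p = c then 1 else 0) := by
  obtain ⟨c1, c2, c3⟩ := c
  obtain ⟨p1, p2, p3⟩ := p
  simp only [R23, Rmat, Rc, Prod.mk.injEq]
  split_ifs
  any_goals ring
  any_goals (exfalso; omega)

lemma sum_delta2 {k : Type*} [CommRing k] {I : Type*} [Fintype I] [DecidableEq I]
    (w v : k) (s c : I) (f : I → k) :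
    (∑ p, (w * (if p = s then (1:k) else 0) + v * (if p = c then 1 else 0)) * f p)
      = w * f s + v * f c := by
  simp only [add_mul, Finset.sum_add_distrib, mul_ite, mul_one, mul_zero, ite_mul, zero_mul,
    Finset.sum_ite_eq', Finset.mem_univ, if_true, mul_assoc]

lemma L12 {k : Type*} [CommRing k] (t : k) {m : ℕ}
    (X : Matrix (Fin m × Fin m × Fin m) (Fin m × Fin m × Fin m) k)
    (c a : Fin m × Fin m × Fin m) :
    (R12 t m * X) c a =
      (if c.1 ≤ c.2.1 then (1:k) else t) * X (c.2.1, c.1, c.2.2) a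
      + (if c.1 < c.2.1 then 1 - t else 0) * X c a := by
  rw [Matrix.mul_apply]
  simp only [R12ptw]
  exact sum_delta2 _ _ _ _ _

lemma L23 {k : Type*} [CommRing k] (t : k) {m : ℕ}
    (X : Matrix (Fin m × Fin m × Fin m) (Fin m × Fin m × Fin m) k)
    (c a : Fin m × Fin m × Fin m) :
    (R23 t m * X) c a =
      (if c.2.1 ≤ c.2.2 then (1:k) else t) * X (c.1, c.2.2, c.2.1) a
      + (if c.2.1 < c.2.2 then 1 - t else 0) * X c a := by
  rw [Matrix.mul_apply]
  simp only [R23ptw]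
  exact sum_delta2 _ _ _ _ _

/-- The normalized operator `R_{(m)}` satisfies the Yang-Baxter equation
`(R ⊗ Id) ∘ (Id ⊗ R) ∘ (R ⊗ Id) = (Id ⊗ R) ∘ (R ⊗ Id) ∘ (Id ⊗ R)`. -/
theorem yang_baxter_equation {k : Type*} [CommRing k] (t : k) (m : ℕ) :
    R12 t m * R23 t m * R12 t m = R23 t m * R12 t m * R23 t m := by
  ext ⟨c1, c2, c3⟩ a
  rw [Matrix.mul_assoc, Matrix.mul_assoc]
  simp only [L12, L23, R12ptw, R23ptw]
  rcases lt_trichotomy c1 c2 with h12 | h12 | h12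
  · rcases lt_trichotomy c2 c3 with h23 | h23 | h23
    · rcases lt_trichotomy c1 c3 with h13 | h13 | h13
      · simp only [h12, h12.le, h12.not_gt, h12.not_ge, h23, h23.le, h23.not_gt, h23.not_ge, h13, h13.le, h13.not_gt, h13.not_ge, le_refl, lt_self_iff_false, if_true, if_false, ite_true, ite_false]
        try ring
      · exfalso; omega
      · exfalso; omega
    · rcases lt_trichotomy c1 c3 with h13 | h13 | h13
      · try subst h23
        simp only [h12, h12.le, h12.not_gt, h12.not_ge, h13, h13.le, h13.not_gt, h13.not_ge, le_refl, lt_self_iff_false, if_true, if_false, ite_true, ite_false]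
        try ring
      · exfalso; omega
      · exfalso; omega
    · rcases lt_trichotomy c1 c3 with h13 | h13 | h13
      · simp only [h12, h12.le, h12.not_gt, h12.not_ge, h23, h23.le, h23.not_gt, h23.not_ge, h13, h13.le, h13.not_gt, h13.not_ge, le_refl, lt_self_iff_false, if_true, if_false, ite_true, ite_false]
        try ring
      · try subst h13
        simp only [h12, h12.le, h12.not_gt, h12.not_ge, h23, h23.le, h23.not_gt, h23.not_ge, le_refl, lt_self_iff_false, if_true, if_false, ite_true, ite_false]
        try ring
      · simp only [h12, h12.le, h12.not_gt, h12.not_ge, h23, h23.le, h23.not_gt, h23.not_ge, h13, h13.le, h13.not_gt, h13.not_ge, le_refl, lt_self_iff_false, if_true, if_false, ite_true, ite_false]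
        try ring
  · rcases lt_trichotomy c2 c3 with h23 | h23 | h23
    · rcases lt_trichotomy c1 c3 with h13 | h13 | h13
      · try subst h12
        simp only [h23, h23.le, h23.not_gt, h23.not_ge, h13, h13.le, h13.not_gt, h13.not_ge, le_refl, lt_self_iff_false, if_true, if_false, ite_true, ite_false]
        try ring
      · exfalso; omega
      · exfalso; omega
    · rcases lt_trichotomy c1 c3 with h13 | h13 | h13
      · exfalso; omega
      · try subst h12
        try subst h23
        try subst h13
        simp only [le_refl, lt_self_iff_false, if_true, if_false, ite_true, ite_false]
        try ring
      · exfalso; omega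
    · rcases lt_trichotomy c1 c3 with h13 | h13 | h13
      · exfalso; omega
      · exfalso; omega
      · try subst h12
        simp only [h23, h23.le, h23.not_gt, h23.not_ge, h13, h13.le, h13.not_gt, h13.not_ge, le_refl, lt_self_iff_false, if_true, if_false, ite_true, ite_false]
        try ring
  · rcases lt_trichotomy c2 c3 with h23 | h23 | h23
    · rcases lt_trichotomy c1 c3 with h13 | h13 | h13
      · simp only [h12, h12.le, h12.not_gt, h12.not_ge, h23, h23.le, h23.not_gt, h23.not_ge, h13, h13.le, h13.not_gt, h13.not_ge, le_refl, lt_self_iff_false, if_true, if_false, ite_true, ite_false]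
        try ring
      · try subst h13
        simp only [h12, h12.le, h12.not_gt, h12.not_ge, h23, h23.le, h23.not_gt, h23.not_ge, le_refl, lt_self_iff_false, if_true, if_false, ite_true, ite_false]
        try ring
      · simp only [h12, h12.le, h12.not_gt, h12.not_ge, h23, h23.le, h23.not_gt, h23.not_ge, h13, h13.le, h13.not_gt, h13.not_ge, le_refl, lt_self_iff_false, if_true, if_false, ite_true, ite_false]
        try ring
    · rcases lt_trichotomy c1 c3 with h13 | h13 | h13
      · exfalso; omega
      · exfalso; omega
      · try subst h23
        simp only [h12, h12.le, h12.not_gt, h12.not_ge, h13, h13.le, h13.not_gt, h13.not_ge, le_refl, lt_self_iff_false, if_true, if_false, ite_true, ite_false]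
        try ring
    · rcases lt_trichotomy c1 c3 with h13 | h13 | h13
      · exfalso; omega
      · exfalso; omega
      · simp only [h12, h12.le, h12.not_gt, h12.not_ge, h23, h23.le, h23.not_gt, h23.not_ge, h13, h13.le, h13.not_gt, h13.not_ge, le_refl, lt_self_iff_false, if_true, if_false, ite_true, ite_false]
        try ring
end

section
/- Every weakly order-preserving map f: X_{(m)} → X_{(m')} satisfies R_{(m')} ∘ (f ⊗ f) = (f ⊗ f) ∘ R_{(m)}, where f also denotes the induced k-linear map kX_{(m)} → kX_{(m')}. -/
/-- The matrix of the induced linear map `f ⊗ f : kX_{(m)} ⊗ kX_{(m)} → kX_{(m')} ⊗ kX_{(m')}`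
for a map of bases `f : X_{(m)} → X_{(m')}`. -/
def Fmat {k : Type*} [CommRing k] (m m' : ℕ) (f : Fin m → Fin m') :
    Matrix (Fin m' × Fin m') (Fin m × Fin m) k :=
  fun p q => if p.1 = f q.1 ∧ p.2 = f q.2 then 1 else 0

/-- Every weakly order-preserving map `f : X_{(m)} → X_{(m')}` satisfies
`R_{(m')} ∘ (f ⊗ f) = (f ⊗ f) ∘ R_{(m)}`. -/
theorem weakly_order_preserving_commutes {k : Type*} [CommRing k] (t : k)
    (m m' : ℕ) (f : Fin m → Fin m') (hf : Monotone f) :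
    Rmat t m' * Fmat (k := k) m m' f = Fmat (k := k) m m' f * Rmat t m := by
  ext ⟨c, d⟩ ⟨a, b⟩
  rw [Matrix.mul_apply, Matrix.mul_apply]
  have hL : ∑ p, Rmat t m' (c, d) p * Fmat (k := k) m m' f p (a, b)
      = Rc t (f a) (f b) c d := by
    rw [Finset.sum_eq_single (f a, f b)]
    · simp [Rmat, Fmat]
    · intro p _ hp
      have : ¬(p.1 = f a ∧ p.2 = f b) := fun hc => hp (Prod.ext hc.1 hc.2)
      simp [Fmat, this]
    · simp
  rw [hL]
  have key : ∀ (x : Fin m × Fin m) (v : k) (C : Prop) (_ : Decidable C),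
      ∑ q : Fin m × Fin m, (if c = f q.1 ∧ d = f q.2 then (1:k) else 0)
        * (if q = x ∧ C then v else 0)
      = if c = f x.1 ∧ d = f x.2 ∧ C then v else 0 := by
    intro x v C hC
    rw [Finset.sum_eq_single x]
    · by_cases h1 : c = f x.1 ∧ d = f x.2 <;> by_cases h2 : C <;>
        simp [h1, h2]
    · intro q _ hq
      have : ¬(q = x ∧ C) := fun hc => hq hc.1
      simp [this]
    · simp
  have hRc : ∀ q : Fin m × Fin m, Rc t a b q.1 q.2
      = (if q = (b, a) ∧ b ≤ a then (1:k) else 0)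
        + (if q = (b, a) ∧ a < b then t else 0)
        + (if q = (a, b) ∧ a < b then 1 - t else 0) := by
    rintro ⟨q1, q2⟩
    by_cases e1 : q1 = b ∧ q2 = a <;> by_cases e2 : q1 = a ∧ q2 = b <;>
      rcases le_or_gt b a with hba | hab
    · simp [Rc, e1.1, e1.2, hba, hba.not_gt]
    · exact absurd (e1.1.symm.trans e2.1) hab.ne'
    · simp [Rc, e1.1, e1.2, hba, hba.not_gt]
    · simp [Rc, e1.1, e1.2, hab, hab.not_ge, hab.ne, hab.ne']
    · have hne : b ≠ a := fun h => e1 ⟨h ▸ e2.1, h ▸ e2.2⟩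
      simp [Rc, e2.1, e2.2, hne, hne.symm, hba.not_gt]
    · simp [Rc, e2.1, e2.2, hab, hab.ne, hab.ne', hab.not_ge]
    all_goals
      have n1 : ¬(q2 = a ∧ q1 = b ∧ b ≤ a) := fun h => e1 ⟨h.2.1, h.1⟩
      have n2 : ¬(q2 = a ∧ q1 = b ∧ a < b) := fun h => e1 ⟨h.2.1, h.1⟩
      have n3 : ¬(q1 = a ∧ q2 = b ∧ a < b) := fun h => e2 ⟨h.1, h.2.1⟩
      simp [Rc, Prod.mk.injEq, n1, n2, n3, e1, e2]
  have hR : ∑ q, Fmat (k := k) m m' f (c, d) q * Rmat t m q (a, b)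
      = (if c = f b ∧ d = f a ∧ b ≤ a then (1:k) else 0)
        + (if c = f b ∧ d = f a ∧ a < b then t else 0)
        + (if c = f a ∧ d = f b ∧ a < b then 1 - t else 0) := by
    simp only [Fmat, Rmat, hRc, mul_add]
    rw [Finset.sum_add_distrib, Finset.sum_add_distrib,
      key (b, a) 1 (b ≤ a) inferInstance, key (b, a) t (a < b) inferInstance,
      key (a, b) (1 - t) (a < b) inferInstance]
  rw [hR]
  rcases lt_trichotomy a b with h | h | h
  · rcases eq_or_lt_of_le (hf h.le) with he | hlt
    · rw [← he]
      by_cases hq : c = f a ∧ d = f a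
      · simp only [Rc, hq.1, hq.2, h, h.not_ge, le_refl, and_true, and_self,
          if_true, and_false, if_false, zero_add]
        ring
      · have hq' : ¬(d = f a ∧ c = f a) := fun hc => hq ⟨hc.2, hc.1⟩
        simp [Rc, hq, hq', h, h.not_ge]
    · have hne : f a ≠ f b := hlt.ne
      by_cases h1 : d = f a ∧ c = f b
      · by_cases h2 : c = f a ∧ d = f b
        · exact absurd (h1.1.symm.trans h2.2) hne
        · simp [Rc, h1.1, h1.2, hlt.not_ge, hne, hne.symm, h, h.not_ge]
      · by_cases h2 : c = f a ∧ d = f b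
        · simp [Rc, h2.1, h2.2, hne, hne.symm, h, h.not_ge, hlt]
        · have h1' : ¬(c = f b ∧ d = f a) := fun hc => h1 ⟨hc.2, hc.1⟩
          simp [Rc, h1, h2, h1', h, h.not_ge, hlt, hlt.not_ge]
  · subst h
    by_cases hq : c = f a ∧ d = f a
    · simp [Rc, hq.1, hq.2, lt_irrefl]
    · have hq' : ¬(d = f a ∧ c = f a) := fun hc => hq ⟨hc.2, hc.1⟩
      simp [Rc, hq, hq', lt_irrefl]
  · have hfba : f b ≤ f a := hf h.le
    by_cases hq : d = f a ∧ c = f b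
    · simp [Rc, hq.1, hq.2, h.le, h.not_gt, hfba, hfba.not_gt]
    · have hq' : ¬(c = f b ∧ d = f a) := fun hc => hq ⟨hc.2, hc.1⟩
      simp [Rc, hq, hq', h.le, h.not_gt, hfba, hfba.not_gt]
end

section
/- The duality map τ_m satisfies the precubic morphism identity: for every n, every 1 ≤ i ≤ n, τ_m ∘ d_{i,n}^ℓ = d_{n+1−i,n}^r ∘ τ_m, where τ_m(a_1,...,a_n) = (m+1−a_n, ..., m+1−a_1). -/
noncomputable section

/-- The matrix (on the standard basis of `(kX_{(m)})^{⊗n}`, identified with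
functions `Fin n → Fin m`) of applying `R` to the tensor factors `p, p+1`
(0-indexed) and the identity elsewhere. -/
def Rpos {k : Type*} [CommRing k] (t : k) (m n : ℕ) (p : ℕ) :
    Matrix (Fin n → Fin m) (Fin n → Fin m) k :=
  fun b a =>
    if hp : p + 1 < n then
      Rc t (a ⟨p, Nat.lt_of_succ_lt hp⟩) (a ⟨p + 1, hp⟩)
           (b ⟨p, Nat.lt_of_succ_lt hp⟩) (b ⟨p + 1, hp⟩) *
        ∏ q : Fin n, if q.1 = p ∨ q.1 = p + 1 then 1 else if b q = a q then 1 else 0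
    else if b = a then 1 else 0

/-- The left wall interaction: delete the leftmost tensor factor. -/
def Lwall {k : Type*} [CommRing k] (m n : ℕ) :
    Matrix (Fin n → Fin m) (Fin (n + 1) → Fin m) k :=
  fun b a => if b = (fun j => a j.succ) then 1 else 0

/-- The right wall interaction: delete the rightmost tensor factor. -/
def Rwall {k : Type*} [CommRing k] (m n : ℕ) :
    Matrix (Fin n → Fin m) (Fin (n + 1) → Fin m) k :=
  fun b a => if b = (fun j => a j.castSucc) then 1 else 0

/-- The left face map `d_i^ℓ : C_{n+1} → C_n` (`1 ≤ i ≤ n+1`):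
apply `R` successively, moving the `i`-th strand to the left wall, then
delete the leftmost tensor factor. -/
def dL {k : Type*} [CommRing k] (t : k) (m n : ℕ) (i : ℕ) :
    Matrix (Fin n → Fin m) (Fin (n + 1) → Fin m) k :=
  Lwall m n * ((List.range (i - 1)).map (fun p => Rpos t m (n + 1) p)).prod

/-- The right face map `d_i^r : C_{n+1} → C_n` (`1 ≤ i ≤ n+1`):
apply `R` successively, moving the `i`-th strand to the right wall, then
delete the rightmost tensor factor. -/
def dR {k : Type*} [CommRing k] (t : k) (m n : ℕ) (i : ℕ) :
    Matrix (Fin n → Fin m) (Fin (n + 1) → Fin m) k :=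
  Rwall m n * ((List.range (n + 1 - i)).map (fun q => Rpos t m (n + 1) (n - 1 - q))).prod

/-- The duality involution `τ_m(a_1,…,a_n) = (m+1−a_n,…,m+1−a_1)` as a matrix. -/
def Tmat {k : Type*} [CommRing k] (m n : ℕ) :
    Matrix (Fin n → Fin m) (Fin n → Fin m) k :=
  fun b a => if b = (fun j => (a j.rev).rev) then 1 else 0

/-- The Yang-Baxter boundary map `∂ = Σ_{i=1}^{n+1} (−1)^i (d_i^ℓ − d_i^r) : C_{n+1} → C_n`. -/
def bd {k : Type*} [CommRing k] (t : k) (m n : ℕ) :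
    Matrix (Fin n → Fin m) (Fin (n + 1) → Fin m) k :=
  ∑ i ∈ Finset.Icc 1 (n + 1), (-1 : k) ^ i • (dL t m n i - dR t m n i)


/-! ### Auxiliary lemmas for the proof -/

/-- The duality involution as a function on basis elements. -/
def tauFun (m n : ℕ) (a : Fin n → Fin m) : Fin n → Fin m := fun j => (a j.rev).rev

lemma tauFun_tauFun (m n : ℕ) (a : Fin n → Fin m) : tauFun m n (tauFun m n a) = a := by
  funext j; simp [tauFun, Fin.rev_rev]

lemma tauFun_eq_iff (m n : ℕ) (a x : Fin n → Fin m) :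
    tauFun m n a = x ↔ a = tauFun m n x := by
  constructor <;> rintro rfl
  · rw [tauFun_tauFun]
  · rw [tauFun_tauFun]

lemma Tmat_apply' {k : Type*} [CommRing k] (m n : ℕ) (b a : Fin n → Fin m) :
    Tmat (k := k) m n b a = if b = tauFun m n a then 1 else 0 := rfl

lemma Tmat_mul_apply {k : Type*} [CommRing k] {m n : ℕ} {I : Type*} [Fintype I]
    (M : Matrix (Fin n → Fin m) I k) (b : Fin n → Fin m) (a : I) :
    (Tmat m n * M : Matrix _ I k) b a = M (tauFun m n b) a := by
  have h : ∀ c : Fin n → Fin m, (b = tauFun m n c) ↔ (c = tauFun m n b) := by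
    intro c
    constructor <;> rintro rfl
    · rw [tauFun_tauFun]
    · rw [tauFun_tauFun]
  change ∑ c, Tmat m n b c * M c a = _
  simp only [Matrix.mul_apply, Tmat_apply', h, ite_mul, one_mul, zero_mul,
    Finset.sum_ite_eq', Finset.mem_univ, if_true]

lemma mul_Tmat_apply {k : Type*} [CommRing k] {m n : ℕ} {I : Type*} [Fintype I]
    (M : Matrix I (Fin n → Fin m) k) (b : I) (a : Fin n → Fin m) :
    (M * Tmat m n : Matrix I _ k) b a = M b (tauFun m n a) := by
  change ∑ c, M b c * Tmat m n c a = _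
  simp only [Matrix.mul_apply, Tmat_apply', mul_ite, mul_one, mul_zero,
    Finset.sum_ite_eq', Finset.mem_univ, if_true]

lemma Rc_rev {k : Type*} [CommRing k] (t : k) {m : ℕ} (a b c d : Fin m) :
    Rc t b.rev a.rev d.rev c.rev = Rc t a b c d := by
  unfold Rc
  simp only [Fin.rev_inj, Fin.rev_le_rev, Fin.rev_lt_rev]
  by_cases h1 : d = a <;> by_cases h2 : c = b <;> by_cases h3 : b ≤ a <;>
    by_cases h4 : a < b <;> by_cases h5 : c = a <;> by_cases h6 : d = b <;>
    simp_all <;> omega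

lemma Tmat_mul_Rpos {k : Type*} [CommRing k] (t : k) (m N p : ℕ) (hp : p + 1 < N) :
    Tmat m N * Rpos t m N p = Rpos t m N (N - 2 - p) * Tmat (k := k) m N := by
  have hq : (N - 2 - p) + 1 < N := by omega
  ext b a
  erw [Tmat_mul_apply, mul_Tmat_apply]
  rw [Rpos, Rpos, dif_pos hp, dif_pos hq]
  have e1 : (⟨p, Nat.lt_of_succ_lt hp⟩ : Fin N).rev = ⟨N - 2 - p + 1, hq⟩ := by
    simp [Fin.rev]; omega
  have e2 : (⟨p + 1, hp⟩ : Fin N).rev = ⟨N - 2 - p, Nat.lt_of_succ_lt hq⟩ := by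
    simp [Fin.rev]; omega
  have e3 : (⟨N - 2 - p, Nat.lt_of_succ_lt hq⟩ : Fin N).rev = ⟨p + 1, hp⟩ := by
    simp [Fin.rev]; omega
  have e4 : (⟨N - 2 - p + 1, hq⟩ : Fin N).rev = ⟨p, Nat.lt_of_succ_lt hp⟩ := by
    simp [Fin.rev]; omega
  congr 1
  · simp only [tauFun, e1, e2, e3, e4]
    rw [← Rc_rev t (a ⟨p, Nat.lt_of_succ_lt hp⟩) (a ⟨p + 1, hp⟩)
      ((b ⟨N - 2 - p + 1, hq⟩).rev) ((b ⟨N - 2 - p, Nat.lt_of_succ_lt hq⟩).rev)]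
    rw [Fin.rev_rev, Fin.rev_rev]
  · refine Fintype.prod_equiv Fin.revPerm _ _ (fun q => ?_)
    simp only [Fin.revPerm_apply]
    have hcond : (q.1 = p ∨ q.1 = p + 1) ↔
        ((Fin.rev q).1 = N - 2 - p ∨ (Fin.rev q).1 = N - 2 - p + 1) := by
      have := q.2
      simp only [Fin.rev]
      omega
    by_cases h : q.1 = p ∨ q.1 = p + 1
    · rw [if_pos h, if_pos (hcond.mp h)]
    · rw [if_neg h, if_neg (fun hh => h (hcond.mpr hh))]
      have hinner : (tauFun m N b q = a q) ↔ (b q.rev = tauFun m N a q.rev) := by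
        simp only [tauFun, Fin.rev_rev]
        constructor
        · intro hh; rw [← hh, Fin.rev_rev]
        · intro hh; rw [hh, Fin.rev_rev]
      by_cases h2 : tauFun m N b q = a q
      · rw [if_pos h2, if_pos (hinner.mp h2)]
      · rw [if_neg h2, if_neg (fun hh => h2 (hinner.mpr hh))]

lemma Tmat_mul_Lwall {k : Type*} [CommRing k] (m n : ℕ) :
    Tmat m n * Lwall m n = Rwall m n * Tmat (k := k) m (n + 1) := by
  ext b a
  erw [Tmat_mul_apply, mul_Tmat_apply]
  unfold Lwall Rwall
  have key : (tauFun m n b = fun j => a j.succ) ↔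
      (b = fun j => tauFun m (n + 1) a j.castSucc) := by
    rw [tauFun_eq_iff]
    constructor <;> intro h <;> rw [h] <;> funext j <;>
      simp [tauFun, Fin.rev_castSucc]
  by_cases h : tauFun m n b = fun j => a j.succ
  · rw [if_pos h, if_pos (key.mp h)]
  · rw [if_neg h, if_neg (fun hh => h (key.mpr hh))]

lemma Tmat_mul_listProd {k : Type*} [CommRing k] (t : k) (m N : ℕ) (L : List ℕ)
    (hL : ∀ p ∈ L, p + 1 < N) :
    Tmat m N * (L.map (fun p => Rpos t m N p)).prod
      = (L.map (fun p => Rpos t m N (N - 2 - p))).prod * Tmat (k := k) m N := by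
  induction L with
  | nil => simp
  | cons p L ih =>
    simp only [List.map_cons, List.prod_cons]
    rw [← mul_assoc, Tmat_mul_Rpos t m N p (hL p List.mem_cons_self),
      mul_assoc, ih (fun q hq => hL q (List.mem_cons_of_mem p hq)), ← mul_assoc]

/-- The duality map `τ_m` satisfies the precubic morphism identity
`τ_m ∘ d_{i,n}^ℓ = d_{n+1−i,n}^r ∘ τ_m` (here the face maps go from the
`(n+1)`-st to the `n`-th chain group, so the dual index is `n+2-i`). -/
theorem tau_precubic_morphism {k : Type*} [CommRing k] (t : k) (m n i : ℕ)
    (h1 : 1 ≤ i) (h2 : i ≤ n + 1) :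
    Tmat m n * dL t m n i = dR t m n (n + 2 - i) * Tmat (k := k) m (n + 1) := by
  unfold dL dR
  erw [← Matrix.mul_assoc, Tmat_mul_Lwall, Matrix.mul_assoc,
    Tmat_mul_listProd t m (n + 1) (List.range (i - 1))
      (fun p hp => by simp only [List.mem_range] at hp; omega)]
  have h3 : n + 1 - (n + 2 - i) = i - 1 := by omega
  have h4 : (List.range (i - 1)).map (fun p => Rpos t m (n + 1) (n + 1 - 2 - p))
      = (List.range (i - 1)).map (fun q => Rpos (k := k) t m (n + 1) (n - 1 - q)) := by
    apply List.map_congr_left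
    intro p _
    congr 1
  rw [h3, h4, ← Matrix.mul_assoc]
  rfl
end
end

section
/- For a ≤ b ≤ c ≤ d in X_{(m)}, d_4^ℓ(a⊗b⊗c⊗d) = (1−y²)³(b,c,d) + y²(1−y²)²(a,c,d) + y²(1−y²)²(c,b,d) + y⁴(1−y²)(a,b,d) + y²(1−y²)²(b,d,c) + y⁴(1−y²)(a,d,c) + y⁴(1−y²)(d,b,c) + y⁶(a,b,c). -/
noncomputable section

lemma Rc_le {k : Type*} [CommRing k] (t : k) {m : ℕ} {x y : Fin m} (h : x ≤ y) (c d : Fin m) :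
    Rc t x y c d = (1 - t) * (if c = x ∧ d = y then 1 else 0)
      + t * (if c = y ∧ d = x then 1 else 0) := by
  unfold Rc
  rcases eq_or_lt_of_le h with rfl | hlt
  · split_ifs <;> simp_all
  · have h1 : ¬ y ≤ x := not_le.mpr hlt
    have h2 : x ≠ y := ne_of_lt hlt
    split_ifs <;> simp_all

lemma prod_agree {k : Type*} [CommRing k] {m n p : ℕ} (x v : Fin n → Fin m) :
    (∏ q : Fin n, if q.1 = p ∨ q.1 = p + 1 then (1 : k) else if x q = v q then 1 else 0)
      = if ∀ q : Fin n, q.1 ≠ p → q.1 ≠ p + 1 → x q = v q then 1 else 0 := by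
  split_ifs with h
  · exact Finset.prod_eq_one fun q _ => by
      by_cases hq : q.1 = p ∨ q.1 = p + 1
      · simp [hq]
      · push_neg at hq
        simp [hq.1, hq.2, h q hq.1 hq.2]
  · push_neg at h
    obtain ⟨q, hq1, hq2, hq3⟩ := h
    exact Finset.prod_eq_zero (Finset.mem_univ q) (by simp [hq1, hq2, hq3])

lemma Rpos_apply_le {k : Type*} [CommRing k] (t : k) {m n p : ℕ} (hp : p + 1 < n)
    (v u : Fin n → Fin m)
    (h : v ⟨p, Nat.lt_of_succ_lt hp⟩ ≤ v ⟨p + 1, hp⟩)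
    (hu1 : u ⟨p, Nat.lt_of_succ_lt hp⟩ = v ⟨p + 1, hp⟩)
    (hu2 : u ⟨p + 1, hp⟩ = v ⟨p, Nat.lt_of_succ_lt hp⟩)
    (hu3 : ∀ q : Fin n, q.1 ≠ p → q.1 ≠ p + 1 → u q = v q)
    (x : Fin n → Fin m) :
    Rpos t m n p x v = (1 - t) * (if x = v then 1 else 0) + t * (if x = u then 1 else 0) := by
  unfold Rpos
  rw [dif_pos hp, Rc_le t h, prod_agree, add_mul, mul_assoc, mul_assoc]
  congr 2
  · rw [ite_zero_mul_ite_zero, one_mul]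
    refine if_congr ⟨?_, ?_⟩ rfl rfl
    · rintro ⟨⟨h1, h2⟩, h3⟩
      funext q
      by_cases hq1 : q.1 = p
      · rw [show q = ⟨p, Nat.lt_of_succ_lt hp⟩ from Fin.ext hq1]; exact h1
      by_cases hq2 : q.1 = p + 1
      · rw [show q = ⟨p + 1, hp⟩ from Fin.ext hq2]; exact h2
      · exact h3 q hq1 hq2
    · rintro rfl
      exact ⟨⟨rfl, rfl⟩, fun q _ _ => rfl⟩
  · rw [ite_zero_mul_ite_zero, one_mul]
    refine if_congr ⟨?_, ?_⟩ rfl rfl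
    · rintro ⟨⟨h1, h2⟩, h3⟩
      funext q
      by_cases hq1 : q.1 = p
      · rw [show q = ⟨p, Nat.lt_of_succ_lt hp⟩ from Fin.ext hq1, hu1]; exact h1
      by_cases hq2 : q.1 = p + 1
      · rw [show q = ⟨p + 1, hp⟩ from Fin.ext hq2, hu2]; exact h2
      · rw [hu3 q hq1 hq2]; exact h3 q hq1 hq2
    · rintro rfl
      exact ⟨⟨hu1, hu2⟩, fun q hq1 hq2 => hu3 q hq1 hq2⟩

lemma mul_Rpos {k : Type*} [CommRing k] (t : k) {m n n' p : ℕ} (hp : p + 1 < n)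
    (N : Matrix (Fin n' → Fin m) (Fin n → Fin m) k)
    (v u : Fin n → Fin m)
    (h : v ⟨p, Nat.lt_of_succ_lt hp⟩ ≤ v ⟨p + 1, hp⟩)
    (hu1 : u ⟨p, Nat.lt_of_succ_lt hp⟩ = v ⟨p + 1, hp⟩)
    (hu2 : u ⟨p + 1, hp⟩ = v ⟨p, Nat.lt_of_succ_lt hp⟩)
    (hu3 : ∀ q : Fin n, q.1 ≠ p → q.1 ≠ p + 1 → u q = v q)
    (w : Fin n' → Fin m) :
    (N * Rpos t m n p) w v = (1 - t) * N w v + t * N w u := by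
  simp only [Matrix.mul_apply, Rpos_apply_le t hp v u h hu1 hu2 hu3, mul_add,
    Finset.sum_add_distrib, mul_ite, mul_one, mul_zero, Finset.sum_ite_eq']
  simp [mul_comm]

lemma Lwall_test {k : Type*} [CommRing k] (m : ℕ) (w : Fin 3 → Fin m) (x0 x1 x2 x3 : Fin m) :
    Lwall (k := k) m 3 w ![x0, x1, x2, x3] = if w = ![x1, x2, x3] then 1 else 0 := by
  have h : (fun j : Fin 3 => (![x0, x1, x2, x3]) j.succ) = ![x1, x2, x3] := by
    funext j; fin_cases j <;> rfl
  simp [Lwall, h]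


/-- For `a ≤ b ≤ c ≤ d` in `X_{(m)}`,
`d_4^ℓ(a⊗b⊗c⊗d) = (1−y²)³(b,c,d) + y²(1−y²)²(a,c,d) + y²(1−y²)²(c,b,d)
+ y⁴(1−y²)(a,b,d) + y²(1−y²)²(b,d,c) + y⁴(1−y²)(a,d,c) + y⁴(1−y²)(d,b,c) + y⁶(a,b,c)`
(stated coefficientwise: `w` ranges over the basis 3-tuples, `t = y²`). -/
theorem d4l_formula {k : Type*} [CommRing k] (t : k) (m : ℕ) (a b c d : Fin m)
    (hab : a ≤ b) (hbc : b ≤ c) (hcd : c ≤ d) (w : Fin 3 → Fin m) :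
    dL t m 3 4 w ![a, b, c, d] =
      (1 - t) ^ 3 * (if w = ![b, c, d] then 1 else 0)
      + t * (1 - t) ^ 2 * (if w = ![a, c, d] then 1 else 0)
      + t * (1 - t) ^ 2 * (if w = ![c, b, d] then 1 else 0)
      + t ^ 2 * (1 - t) * (if w = ![a, b, d] then 1 else 0)
      + t * (1 - t) ^ 2 * (if w = ![b, d, c] then 1 else 0)
      + t ^ 2 * (1 - t) * (if w = ![a, d, c] then 1 else 0)
      + t ^ 2 * (1 - t) * (if w = ![d, b, c] then 1 else 0)
      + t ^ 3 * (if w = ![a, b, c] then 1 else 0) := by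
  have e : dL t m 3 4 = Lwall (k := k) m 3 * Rpos t m (3+1) 0 * Rpos t m (3+1) 1
      * Rpos t m (3+1) 2 := by
    simp only [dL, show (4 : ℕ) - 1 = 3 from rfl, show List.range 3 = [0, 1, 2] from rfl,
      List.map_cons, List.map_nil, List.prod_cons, List.prod_nil, Matrix.mul_one,
      Matrix.mul_assoc]
    rfl
  rw [e]
  rw [mul_Rpos t (show (2 : ℕ) + 1 < 3+1 by norm_num) _ ![a, b, c, d] ![a, b, d, c]
    (by simpa using (hcd)) rfl rfl (by intro q h1 h2; fin_cases q <;> simp_all)]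
  rw [mul_Rpos t (show (1 : ℕ) + 1 < 3+1 by norm_num) _ ![a, b, c, d] ![a, c, b, d]
    (by simpa using (hbc)) rfl rfl (by intro q h1 h2; fin_cases q <;> simp_all)]
  rw [mul_Rpos t (show (1 : ℕ) + 1 < 3+1 by norm_num) _ ![a, b, d, c] ![a, d, b, c]
    (by simpa using (hbc.trans hcd)) rfl rfl (by intro q h1 h2; fin_cases q <;> simp_all)]
  rw [mul_Rpos t (show (0 : ℕ) + 1 < 3+1 by norm_num) _ ![a, b, c, d] ![b, a, c, d]
    (by simpa using (hab)) rfl rfl (by intro q h1 h2; fin_cases q <;> simp_all)]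
  rw [mul_Rpos t (show (0 : ℕ) + 1 < 3+1 by norm_num) _ ![a, c, b, d] ![c, a, b, d]
    (by simpa using (hab.trans hbc)) rfl rfl (by intro q h1 h2; fin_cases q <;> simp_all)]
  rw [mul_Rpos t (show (0 : ℕ) + 1 < 3+1 by norm_num) _ ![a, b, d, c] ![b, a, d, c]
    (by simpa using (hab)) rfl rfl (by intro q h1 h2; fin_cases q <;> simp_all)]
  rw [mul_Rpos t (show (0 : ℕ) + 1 < 3+1 by norm_num) _ ![a, d, b, c] ![d, a, b, c]
    (by simpa using (hab.trans (hbc.trans hcd))) rfl rfl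
    (by intro q h1 h2; fin_cases q <;> simp_all)]
  simp only [Lwall_test]
  ring
end
end
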